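/- Let p and q be real polynomials with no common real root, and suppose max(deg p, deg q) is odd. Then the rational function f(x) = p(x)/q(x), defined on ℝ minus the real roots of q, attains all but finitely many real values. -/

import Mathlib

open Polynomial Filter

lemma aux_exists_root_of_odd_natDegree (P : ℝ[X]) (h : Odd P.natDegree) :
    ∃ x : ℝ, P.eval x = 0 := by
  have hn : 0 < P.natDegree := h.pos
  have hP : P ≠ 0 := fun h0 => by simp [h0] at hn
  have hdeg : 0 < P.degree := natDegree_pos_iff_degree_pos.mp hn
  have hlc : P.leadingCoeff ≠ 0 := leadingCoeff_ne_zero.mpr hP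
  set Q : ℝ[X] := P.comp (-X) with hQ
  have hQeval : ∀ x : ℝ, Q.eval x = P.eval (-x) := by
    intro x; simp [hQ, eval_comp]
  have hQnd : Q.natDegree = P.natDegree := by
    simp [hQ, natDegree_comp]
  have hQdeg : 0 < Q.degree := natDegree_pos_iff_degree_pos.mp (hQnd ▸ hn)
  have hQlc : Q.leadingCoeff = -P.leadingCoeff := by
    rw [hQ, leadingCoeff_comp (by simp)]
    simp [h.neg_one_pow]
  have hcont : Continuous fun x : ℝ => P.eval x := P.continuous
  have key : ∀ x : ℝ, (fun x : ℝ => P.eval x) x = ((fun x : ℝ => Q.eval x) ∘ fun x : ℝ => -x) x := by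
    intro x; simp [hQeval]
  rcases lt_or_gt_of_ne hlc with hneg | hpos
  · -- leading coeff negative: P → atBot at +∞, atTop at -∞
    have htop : Tendsto (fun x : ℝ => P.eval x) atTop atBot :=
      P.tendsto_atBot_of_leadingCoeff_nonpos hdeg hneg.le
    have hQtop : Tendsto (fun x : ℝ => Q.eval x) atTop atTop :=
      Q.tendsto_atTop_of_leadingCoeff_nonneg hQdeg (by rw [hQlc]; linarith)
    have hbot : Tendsto (fun x : ℝ => P.eval x) atBot atTop := by
      have := hQtop.comp tendsto_neg_atBot_atTop
      exact this.congr fun x => (key x).symm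
    obtain ⟨x, hx⟩ := hcont.surjective' hbot htop 0
    exact ⟨x, hx⟩
  · have htop : Tendsto (fun x : ℝ => P.eval x) atTop atTop :=
      P.tendsto_atTop_of_leadingCoeff_nonneg hdeg hpos.le
    have hQtop : Tendsto (fun x : ℝ => Q.eval x) atTop atBot :=
      Q.tendsto_atBot_of_leadingCoeff_nonpos hQdeg (by rw [hQlc]; linarith)
    have hbot : Tendsto (fun x : ℝ => P.eval x) atBot atBot := by
      have := hQtop.comp tendsto_neg_atBot_atTop
      exact this.congr fun x => (key x).symm
    obtain ⟨x, hx⟩ := hcont.surjective htop hbot 0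
    exact ⟨x, hx⟩

theorem almost_surjective_of_odd_maxdeg (p q : ℝ[X])
    (hcr : ∀ x : ℝ, ¬ (p.eval x = 0 ∧ q.eval x = 0))
    (hodd : Odd (max p.natDegree q.natDegree)) :
    {y : ℝ | ¬ ∃ x : ℝ, q.eval x ≠ 0 ∧ p.eval x / q.eval x = y}.Finite := by
  have hq : q ≠ 0 := by
    rintro rfl
    simp only [natDegree_zero, max_eq_left (Nat.zero_le _)] at hodd
    obtain ⟨x, hx⟩ := aux_exists_root_of_odd_natDegree p hodd
    exact hcr x ⟨hx, by simp⟩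
  have hp : p ≠ 0 := by
    rintro rfl
    simp only [natDegree_zero, max_eq_right (Nat.zero_le _)] at hodd
    obtain ⟨x, hx⟩ := aux_exists_root_of_odd_natDegree q hodd
    exact hcr x ⟨by simp, hx⟩
  have hplc : p.leadingCoeff ≠ 0 := leadingCoeff_ne_zero.mpr hp
  have hqlc : q.leadingCoeff ≠ 0 := leadingCoeff_ne_zero.mpr hq
  apply Set.Finite.subset ((Set.finite_singleton (p.leadingCoeff / q.leadingCoeff)).insert 0)
  intro y hy
  by_contra hmem
  simp only [Set.mem_insert_iff, Set.mem_singleton_iff, not_or] at hmem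
  obtain ⟨hy0, hyr⟩ := hmem
  apply hy
  set N := max p.natDegree q.natDegree with hN
  set g : ℝ[X] := p - C y * q with hg
  -- coefficient of g at N is nonzero
  have hcoeff : g.coeff N ≠ 0 := by
    rw [hg, coeff_sub, coeff_C_mul]
    rcases lt_trichotomy p.natDegree q.natDegree with hlt | heq | hgt
    · have h1 : p.coeff N = 0 := coeff_eq_zero_of_natDegree_lt (by omega)
      have h2 : q.coeff N = q.leadingCoeff := by
        rw [hN, max_eq_right hlt.le]; rfl
      rw [h1, h2]
      simp only [zero_sub, neg_ne_zero]
      exact mul_ne_zero hy0 hqlc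
    · have h1 : p.coeff N = p.leadingCoeff := by
        rw [hN, max_eq_left heq.ge]; rfl
      have h2 : q.coeff N = q.leadingCoeff := by
        rw [hN, heq, max_self]; rfl
      rw [h1, h2, sub_ne_zero]
      intro hcontra
      exact hyr (by field_simp [hcontra.symm]; exact hcontra.symm)
    · have h1 : p.coeff N = p.leadingCoeff := by
        rw [hN, max_eq_left hgt.le]; rfl
      have h2 : q.coeff N = 0 := coeff_eq_zero_of_natDegree_lt (by omega)
      rw [h1, h2, mul_zero, sub_zero]
      exact hplc
  have hle : g.natDegree ≤ N := by
    refine le_trans (natDegree_sub_le _ _) ?_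
    exact max_le (le_max_left _ _)
      (le_trans (natDegree_C_mul_le _ _) (le_max_right _ _))
  have hnd : g.natDegree = N := le_antisymm hle (le_natDegree_of_ne_zero hcoeff)
  obtain ⟨x, hx⟩ := aux_exists_root_of_odd_natDegree g (hnd ▸ hodd)
  have hpq : p.eval x = y * q.eval x := by
    have := hx
    simp only [hg, eval_sub, eval_mul, eval_C, sub_eq_zero] at this
    exact this
  have hqx : q.eval x ≠ 0 := by
    intro h0
    exact hcr x ⟨by rw [hpq, h0, mul_zero], h0⟩
  exact ⟨x, hqx, by rw [hpq]; field_simp⟩
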